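/- Any nonconstant continuous piecewise linear 1-periodic function f: ℝ → ℝ satisfies T(r, f) ≍ κ r² for some κ > 0 (i.e. there are positive constants c₁ ≤ c₂ with c₁ r² ≤ T(r, f) ≤ c₂ r² for all large r); in particular f is of order ρ(f) = limsup_{r→∞} log T(r, f) / log r = 2. -/

import Mathlib

open Set

/-- `f` is tropical meromorphic: continuous, piecewise linear with one-sided
slopes around every point, and `ω x` is the jump of the derivative at `x`
(right slope minus left slope); the jump points are discrete. -/
structure TropicalMero (f : ℝ → ℝ) (ω : ℝ → ℝ) : Prop where
  cont : Continuous f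
  slopes : ∀ x : ℝ, ∃ ε > 0, ∃ sl sr : ℝ,
    (∀ y ∈ Set.Ioc (x - ε) x, f y = f x + sl * (y - x)) ∧
    (∀ y ∈ Set.Ico x (x + ε), f y = f x + sr * (y - x)) ∧
    sr - sl = ω x
  discrete : ∀ r : ℝ, 0 < r → (Function.support ω ∩ Set.Ioo (-r) r).Finite

/-- Tropical proximity function. -/
noncomputable def mfun (f : ℝ → ℝ) (r : ℝ) : ℝ :=
  (max (f r) 0 + max (f (-r)) 0) / 2

/-- Tropical counting function for poles (points with `ω b < 0`) in `(-r, r)`. -/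
noncomputable def Nfun (ω : ℝ → ℝ) (r : ℝ) : ℝ :=
  (1 / 2) * ∑ᶠ b ∈ {b : ℝ | b ∈ Set.Ioo (-r) r ∧ ω b < 0}, (-(ω b)) * (r - |b|)

/-- Tropical characteristic function. -/
noncomputable def Tfun (f ω : ℝ → ℝ) (r : ℝ) : ℝ := mfun f r + Nfun ω r

lemma left_slope_unique {f : ℝ → ℝ} {x ε ε' sl sl' : ℝ} (hε : 0 < ε) (hε' : 0 < ε')
    (h : ∀ y ∈ Set.Ioc (x - ε) x, f y = f x + sl * (y - x))
    (h' : ∀ y ∈ Set.Ioc (x - ε') x, f y = f x + sl' * (y - x)) : sl = sl' := by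
  set δ := min ε ε' / 2 with hδdef
  have hδε : δ ≤ ε / 2 := by
    have := min_le_left ε ε'; simp only [hδdef]; linarith
  have hδε' : δ ≤ ε' / 2 := by
    have := min_le_right ε ε'; simp only [hδdef]; linarith
  have hδ0 : 0 < δ := by have := lt_min hε hε'; simp only [hδdef]; linarith
  have hy : x - δ ∈ Set.Ioc (x - ε) x := ⟨by linarith, by linarith⟩
  have hy' : x - δ ∈ Set.Ioc (x - ε') x := ⟨by linarith, by linarith⟩
  have h1 := h _ hy
  have h2 := h' _ hy'
  rw [h1] at h2
  have : sl * δ = sl' * δ := by nlinarith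
  exact mul_right_cancel₀ (ne_of_gt hδ0) this

lemma right_slope_unique {f : ℝ → ℝ} {x ε ε' sr sr' : ℝ} (hε : 0 < ε) (hε' : 0 < ε')
    (h : ∀ y ∈ Set.Ico x (x + ε), f y = f x + sr * (y - x))
    (h' : ∀ y ∈ Set.Ico x (x + ε'), f y = f x + sr' * (y - x)) : sr = sr' := by
  set δ := min ε ε' / 2 with hδdef
  have hδε : δ ≤ ε / 2 := by
    have := min_le_left ε ε'; simp only [hδdef]; linarith
  have hδε' : δ ≤ ε' / 2 := by
    have := min_le_right ε ε'; simp only [hδdef]; linarith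
  have hδ0 : 0 < δ := by have := lt_min hε hε'; simp only [hδdef]; linarith
  have hy : x + δ ∈ Set.Ico x (x + ε) := ⟨by linarith, by linarith⟩
  have hy' : x + δ ∈ Set.Ico x (x + ε') := ⟨by linarith, by linarith⟩
  have h1 := h _ hy
  have h2 := h' _ hy'
  rw [h1] at h2
  have : sr * δ = sr' * δ := by nlinarith
  exact mul_right_cancel₀ (ne_of_gt hδ0) this

lemma omega_add_one {f ω : ℝ → ℝ} (h : TropicalMero f ω) (hper : ∀ x, f (x + 1) = f x)
    (x : ℝ) : ω (x + 1) = ω x := by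
  obtain ⟨ε, hε, sl, sr, hl, hr, hω⟩ := h.slopes x
  obtain ⟨ε', hε', sl', sr', hl', hr', hω'⟩ := h.slopes (x + 1)
  have hfy : ∀ y : ℝ, f y = f (y - 1) := by
    intro y; have := hper (y - 1); rw [sub_add_cancel] at this; exact this
  have hl2 : ∀ y ∈ Set.Ioc (x + 1 - ε) (x + 1), f y = f (x + 1) + sl * (y - (x + 1)) := by
    intro y hy
    have hmem : y - 1 ∈ Set.Ioc (x - ε) x := ⟨by linarith [hy.1], by linarith [hy.2]⟩
    rw [hfy y, hl _ hmem, hper]; ring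
  have hr2 : ∀ y ∈ Set.Ico (x + 1) (x + 1 + ε), f y = f (x + 1) + sr * (y - (x + 1)) := by
    intro y hy
    have hmem : y - 1 ∈ Set.Ico x (x + ε) := ⟨by linarith [hy.1], by linarith [hy.2]⟩
    rw [hfy y, hr _ hmem, hper]; ring
  have e1 : sl' = sl := left_slope_unique hε' hε hl' hl2
  have e2 : sr' = sr := right_slope_unique hε' hε hr' hr2
  rw [← hω', ← hω, e1, e2]

lemma f_int {f : ℝ → ℝ} (hper : ∀ x, f (x + 1) = f x) : ∀ (n : ℤ) (x : ℝ), f (x + n) = f x := by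
  intro n
  induction n using Int.induction_on with
  | zero => simp
  | succ k ih =>
      intro x
      have ih' := ih x; push_cast at ih' ⊢
      rw [show x + ((k : ℝ) + 1) = (x + k) + 1 by ring, hper, ih']
  | pred k ih =>
      intro x
      have := hper (x + (-(k : ℝ) - 1))
      push_cast
      rw [show x + (-(k : ℝ) - 1) + 1 = x + (-(k:ℝ)) by ring] at this
      have ih' := ih x
      push_cast at ih'
      rw [← this, ih']

lemma omega_int {f ω : ℝ → ℝ} (h : TropicalMero f ω) (hper : ∀ x, f (x + 1) = f x) :
    ∀ (n : ℤ) (x : ℝ), ω (x + n) = ω x := by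
  intro n
  induction n using Int.induction_on with
  | zero => simp
  | succ k ih =>
      intro x
      have ih' := ih x; push_cast at ih' ⊢
      rw [show x + ((k : ℝ) + 1) = (x + k) + 1 by ring, omega_add_one h hper, ih']
  | pred k ih =>
      intro x
      have := omega_add_one h hper (x + (-(k : ℝ) - 1))
      push_cast
      rw [show x + (-(k : ℝ) - 1) + 1 = x + (-(k:ℝ)) by ring] at this
      have ih' := ih x
      push_cast at ih'
      rw [← this, ih']

lemma f_fract {f : ℝ → ℝ} (hper : ∀ x, f (x + 1) = f x) (x : ℝ) : f (Int.fract x) = f x := by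
  have := f_int hper ⌊x⌋ (Int.fract x)
  rw [Int.fract_add_floor] at this; exact this.symm

lemma omega_fract {f ω : ℝ → ℝ} (h : TropicalMero f ω) (hper : ∀ x, f (x + 1) = f x) (x : ℝ) :
    ω (Int.fract x) = ω x := by
  have := omega_int h hper ⌊x⌋ (Int.fract x)
  rw [Int.fract_add_floor] at this; exact this.symm

lemma exists_pole {f ω : ℝ → ℝ} (h : TropicalMero f ω) (hper : ∀ x, f (x + 1) = f x)
    (hnc : ∃ x y, f x ≠ f y) : ∃ b, ω b < 0 := by
  by_contra hno
  push_neg at hno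
  obtain ⟨x, y, hxy⟩ := hnc
  obtain ⟨x₀, hx₀mem, hmax⟩ := isCompact_Icc.exists_isMaxOn (Set.nonempty_Icc.2 zero_le_one)
    h.cont.continuousOn
  have hglobal : ∀ z, f z ≤ f x₀ := by
    intro z
    rw [← f_fract hper z]
    exact hmax ⟨Int.fract_nonneg z, (Int.fract_lt_one z).le⟩
  set A := {z : ℝ | f z = f x₀} with hA
  have hA_closed : IsClosed A := isClosed_eq h.cont continuous_const
  have hA_open : IsOpen A := by
    rw [Metric.isOpen_iff]
    intro z hz
    obtain ⟨ε, hε, sl, sr, hl, hr, hω⟩ := h.slopes z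
    have hzA : f z = f x₀ := hz
    have hsl : 0 ≤ sl := by
      have hy : z - ε / 2 ∈ Set.Ioc (z - ε) z := ⟨by linarith, by linarith⟩
      have := hl _ hy
      have hle : f (z - ε / 2) ≤ f z := by rw [hzA]; exact hglobal _
      nlinarith
    have hsr : sr ≤ 0 := by
      have hy : z + ε / 2 ∈ Set.Ico z (z + ε) := ⟨by linarith, by linarith⟩
      have := hr _ hy
      have hle : f (z + ε / 2) ≤ f z := by rw [hzA]; exact hglobal _
      nlinarith
    have hω0 : 0 ≤ ω z := hno z
    have hsl0 : sl = 0 := by linarith [hω.symm ▸ hω0]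
    have hsr0 : sr = 0 := by linarith [hω.symm ▸ hω0]
    refine ⟨ε, hε, fun w hw => ?_⟩
    rw [Metric.mem_ball, Real.dist_eq, abs_lt] at hw
    rcases le_or_gt w z with hwz | hwz
    · have := hl w ⟨by linarith [hw.1], hwz⟩
      show f w = f x₀
      rw [this, hsl0, ← hzA]; ring
    · have := hr w ⟨hwz.le, by linarith [hw.2]⟩
      show f w = f x₀
      rw [this, hsr0, ← hzA]; ring
  have : A = Set.univ := IsClopen.eq_univ ⟨hA_closed, hA_open⟩ ⟨x₀, rfl⟩
  have hx : f x = f x₀ := by have hxA : x ∈ A := by rw [this]; trivial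
                             exact hxA
  have hy' : f y = f x₀ := by have hyA : y ∈ A := by rw [this]; trivial
                              exact hyA
  exact hxy (hx.trans hy'.symm)

set_option maxHeartbeats 1600000 in
/-- A nonconstant 1-periodic tropical meromorphic function satisfies
`T(r, f) ≍ r²` and has order exactly 2. -/
theorem stmt13 (f ω : ℝ → ℝ) (h : TropicalMero f ω)
    (hper : ∀ x, f (x + 1) = f x) (hnc : ∃ x y, f x ≠ f y) :
    (∃ c₁ c₂ r₀ : ℝ, 0 < c₁ ∧ 0 < c₂ ∧
      ∀ r ≥ r₀, c₁ * r ^ 2 ≤ Tfun f ω r ∧ Tfun f ω r ≤ c₂ * r ^ 2) ∧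
    Filter.limsup (fun r => Real.log (Tfun f ω r) / Real.log r) Filter.atTop = 2 := by
  have hωint := omega_int h hper
  obtain ⟨b₁, hb₁⟩ := exists_pole h hper hnc
  set b₀ := Int.fract b₁ with hb₀def
  have hb₀ω : ω b₀ < 0 := by rw [hb₀def, omega_fract h hper]; exact hb₁
  have hb₀0 : 0 ≤ b₀ := Int.fract_nonneg b₁
  have hb₀1 : b₀ < 1 := Int.fract_lt_one b₁
  set τ := -ω b₀ with hτdef
  have hτ : 0 < τ := by rw [hτdef]; linarith
  obtain ⟨x₀, hx₀mem, hmax⟩ := isCompact_Icc.exists_isMaxOn (Set.nonempty_Icc.2 zero_le_one)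
    h.cont.continuousOn
  have hglobal : ∀ z, f z ≤ f x₀ := fun z => by
    rw [← f_fract hper z]; exact hmax ⟨Int.fract_nonneg z, (Int.fract_lt_one z).le⟩
  set C₀ := max (f x₀) 0 with hC₀def
  have hC₀ : 0 ≤ C₀ := le_max_right _ _
  have hm_bound : ∀ r : ℝ, mfun f r ≤ C₀ := by
    intro r
    have h1 : max (f r) 0 ≤ C₀ := max_le_max (hglobal r) le_rfl
    have h2 : max (f (-r)) 0 ≤ C₀ := max_le_max (hglobal (-r)) le_rfl
    unfold mfun; linarith
  have hm_nonneg : ∀ r : ℝ, 0 ≤ mfun f r := by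
    intro r
    have h1 := le_max_right (f r) 0
    have h2 := le_max_right (f (-r)) 0
    unfold mfun; linarith
  have hP₀fin : (Function.support ω ∩ Set.Ico 0 1).Finite := by
    apply (h.discrete 2 two_pos).subset
    rintro b ⟨h1, h2, h3⟩
    exact ⟨h1, by linarith, by linarith⟩
  set F₀ := hP₀fin.toFinset with hF₀def
  set B := ∑ b ∈ F₀, |ω b| with hBdef
  have hB0 : 0 ≤ B := Finset.sum_nonneg fun b _ => abs_nonneg _
  have hmem_F₀ : ∀ b : ℝ, ω b < 0 → Int.fract b ∈ F₀ := by
    intro b hb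
    rw [hF₀def, Set.Finite.mem_toFinset]
    refine ⟨?_, Int.fract_nonneg b, Int.fract_lt_one b⟩
    rw [Function.mem_support, omega_fract h hper]; exact ne_of_lt hb
  have habs_le_B : ∀ b : ℝ, ω b < 0 → -ω b ≤ B := by
    intro b hb
    have h1 : |ω (Int.fract b)| ≤ B :=
      Finset.single_le_sum (fun c _ => abs_nonneg (ω c)) (hmem_F₀ b hb)
    rwa [omega_fract h hper, abs_of_neg hb] at h1
  set mm := (F₀.card : ℝ) with hmmdef
  have hmm0 : 0 ≤ mm := Nat.cast_nonneg _
  have hc₁ : 0 < τ / 16 := by positivity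
  have hc₂ : 0 < C₀ + 2 * mm * B + 1 := by
    have := mul_nonneg (mul_nonneg (by norm_num : (0:ℝ) ≤ 2) hmm0) hB0
    linarith
  have key : ∀ r : ℝ, 4 ≤ r →
      τ / 16 * r ^ 2 ≤ Tfun f ω r ∧ Tfun f ω r ≤ (C₀ + 2 * mm * B + 1) * r ^ 2 := by
    intro r hr
    have hr0 : (0:ℝ) < r := by linarith
    have hfin : ({b : ℝ | b ∈ Set.Ioo (-r) r ∧ ω b < 0}).Finite := by
      apply (h.discrete r hr0).subset
      rintro b ⟨h1, h2⟩
      exact ⟨ne_of_lt h2, h1⟩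
    have hNeq : Nfun ω r = (1 / 2) * ∑ b ∈ hfin.toFinset, (-(ω b)) * (r - |b|) := by
      unfold Nfun
      rw [finsum_mem_eq_finite_toFinset_sum _ hfin]
    have hmemfin : ∀ b : ℝ, b ∈ hfin.toFinset ↔ (-r < b ∧ b < r) ∧ ω b < 0 := by
      intro b
      rw [Set.Finite.mem_toFinset]
      exact Iff.rfl
    -- lower bound
    have lower : τ / 16 * r ^ 2 ≤ Nfun ω r := by
      set n : ℤ := ⌊r / 2⌋ - 1 with hndef
      have hfl : ((⌊r / 2⌋ : ℤ) : ℝ) ≤ r / 2 := Int.floor_le _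
      have hfl2 : r / 2 - 1 < ((⌊r / 2⌋ : ℤ) : ℝ) := Int.sub_one_lt_floor _
      have hn0 : 0 ≤ n := by
        have h2 : (2 : ℤ) ≤ ⌊r / 2⌋ := by
          apply Int.le_floor.2
          push_cast
          linarith
        omega
      have hnr : ((n : ℤ) : ℝ) = ((⌊r / 2⌋ : ℤ) : ℝ) - 1 := by rw [hndef]; push_cast; ring
      set Sfin := (Finset.Icc (0:ℤ) n).image (fun k : ℤ => b₀ + (k : ℝ)) with hSfindef
      have hinj : Function.Injective (fun k : ℤ => b₀ + (k : ℝ)) := by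
        intro a b hab
        simp only at hab
        exact_mod_cast add_left_cancel hab
      have hcard : (Sfin.card : ℝ) = (n : ℝ) + 1 := by
        rw [hSfindef, Finset.card_image_of_injective _ hinj, Int.card_Icc]
        have h1 : ((n + 1 - 0).toNat : ℤ) = n + 1 := by
          rw [Int.toNat_of_nonneg (by omega)]; ring
        exact_mod_cast h1
      have hmemS : ∀ b ∈ Sfin, b ∈ hfin.toFinset ∧ τ * (r / 2) ≤ (-(ω b)) * (r - |b|) := by
        intro b hb
        rw [hSfindef, Finset.mem_image] at hb
        obtain ⟨k, hk, rfl⟩ := hb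
        rw [Finset.mem_Icc] at hk
        have hk0 : (0:ℝ) ≤ (k:ℝ) := by exact_mod_cast hk.1
        have hkn : (k:ℝ) ≤ (n:ℝ) := by exact_mod_cast hk.2
        have hb_lb : 0 ≤ b₀ + (k:ℝ) := by linarith
        have hb_ub : b₀ + (k:ℝ) < r / 2 := by
          have := hnr
          linarith
        have hω' : ω (b₀ + (k:ℝ)) = ω b₀ := hωint k b₀
        have habs : |b₀ + (k:ℝ)| = b₀ + (k:ℝ) := abs_of_nonneg hb_lb
        constructor
        · rw [hmemfin]
          exact ⟨⟨by linarith, by linarith⟩, by rw [hω']; exact hb₀ω⟩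
        · rw [hω', habs, hτdef]
          have h1 : r / 2 ≤ r - (b₀ + (k:ℝ)) := by linarith
          nlinarith
      have hsubset : Sfin ⊆ hfin.toFinset := fun b hb => (hmemS b hb).1
      have hsum1 : ∑ b ∈ Sfin, (-(ω b)) * (r - |b|) ≤
          ∑ b ∈ hfin.toFinset, (-(ω b)) * (r - |b|) := by
        apply Finset.sum_le_sum_of_subset_of_nonneg hsubset
        intro b hb _
        rw [hmemfin] at hb
        have h1 : |b| < r := abs_lt.2 ⟨hb.1.1, hb.1.2⟩
        nlinarith [hb.2]
      have hsum2 : (Sfin.card) • (τ * (r / 2)) ≤ ∑ b ∈ Sfin, (-(ω b)) * (r - |b|) :=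
        Finset.card_nsmul_le_sum _ _ _ fun b hb => (hmemS b hb).2
      rw [nsmul_eq_mul, hcard] at hsum2
      have hcard_lb : r / 4 ≤ (n : ℝ) + 1 := by rw [hnr]; linarith
      rw [hNeq]
      have hq : 0 ≤ τ * (r / 2) := by positivity
      have hq2 := mul_le_mul_of_nonneg_right hcard_lb hq
      have hq3 : r / 4 * (τ * (r / 2)) = τ / 8 * r ^ 2 := by ring
      linarith
    -- upper bound on N
    have upper : Nfun ω r ≤ 2 * mm * B * r ^ 2 := by
      set c : ℤ := ⌈r⌉ with hcdef
      have hcr : (c : ℝ) < r + 1 := by rw [hcdef]; exact Int.ceil_lt_add_one r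
      have hrc : r ≤ (c : ℝ) := by rw [hcdef]; exact Int.le_ceil r
      have hcardle : hfin.toFinset.card ≤ (Finset.Icc (-c) c ×ˢ F₀).card := by
        apply Finset.card_le_card_of_injOn (fun b => ((⌊b⌋ : ℤ), Int.fract b))
        · intro b hb
          rw [Finset.mem_coe, hmemfin] at hb
          rw [Finset.mem_coe, Finset.mem_product]; beta_reduce
          constructor
          · rw [Finset.mem_Icc]
            constructor
            · have h2 : ((-c : ℤ) : ℝ) < ((⌊b⌋ : ℤ) : ℝ) + 1 := by
                push_cast
                have := Int.lt_floor_add_one b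
                linarith [hb.1.1]
              have h3 : (-c : ℤ) < ⌊b⌋ + 1 := by exact_mod_cast h2
              omega
            · have h2 : ((⌊b⌋ : ℤ) : ℝ) < (c : ℝ) := by
                have := Int.floor_le b
                linarith [hb.1.2]
              exact le_of_lt (by exact_mod_cast h2)
          · exact hmem_F₀ b hb.2
        · intro a ha b hb hab
          simp only [Prod.mk.injEq] at hab
          rw [← Int.floor_add_fract a, ← Int.floor_add_fract b, hab.1, hab.2]
      have hcard2 : ((Finset.Icc (-c) c ×ˢ F₀).card : ℝ) ≤ (2 * (r + 1) + 1) * mm := by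
        rw [Finset.card_product, Int.card_Icc]
        have hc0 : (0:ℤ) < c := by exact_mod_cast lt_of_lt_of_le hr0 hrc
        have h1 : ((c + 1 - -c).toNat : ℤ) = 2 * c + 1 := by
          rw [Int.toNat_of_nonneg (by omega)]; ring
        have h2 : ((c + 1 - -c).toNat : ℝ) = 2 * (c:ℝ) + 1 := by exact_mod_cast h1
        push_cast
        rw [h2]
        have : 2 * (c:ℝ) + 1 ≤ 2 * (r + 1) + 1 := by linarith
        rw [hmmdef]
        exact mul_le_mul_of_nonneg_right this (Nat.cast_nonneg _)
      have hterm : ∀ b ∈ hfin.toFinset, (-(ω b)) * (r - |b|) ≤ B * r := by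
        intro b hb
        rw [hmemfin] at hb
        have h1 : -ω b ≤ B := habs_le_B b hb.2
        have h2 : 0 ≤ -ω b := by linarith [hb.2]
        have h3 : |b| < r := abs_lt.2 ⟨hb.1.1, hb.1.2⟩
        have h4 : 0 ≤ |b| := abs_nonneg b
        nlinarith
      have hsum : ∑ b ∈ hfin.toFinset, (-(ω b)) * (r - |b|) ≤ (hfin.toFinset.card) • (B * r) :=
        Finset.sum_le_card_nsmul _ _ _ hterm
      rw [nsmul_eq_mul] at hsum
      have hBr : 0 ≤ B * r := mul_nonneg hB0 hr0.le
      have hcc : (hfin.toFinset.card : ℝ) ≤ (2 * (r + 1) + 1) * mm := by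
        calc (hfin.toFinset.card : ℝ) ≤ ((Finset.Icc (-c) c ×ˢ F₀).card : ℝ) := by
              exact_mod_cast hcardle
          _ ≤ (2 * (r + 1) + 1) * mm := hcard2
      have h23 : 2 * (r + 1) + 1 ≤ 4 * r := by linarith
      rw [hNeq]
      have hstep1 : ∑ b ∈ hfin.toFinset, (-(ω b)) * (r - |b|) ≤ (2 * (r + 1) + 1) * mm * (B * r) :=
        le_trans hsum (mul_le_mul_of_nonneg_right hcc hBr)
      have hstep2 : (2 * (r + 1) + 1) * mm * (B * r) ≤ 4 * r * mm * (B * r) := by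
        have hmmBr : 0 ≤ mm * (B * r) := mul_nonneg hmm0 hBr
        nlinarith
      nlinarith [hstep1, hstep2, hmm0, hB0, hr0]
    constructor
    · have := hm_nonneg r
      unfold Tfun
      linarith [lower]
    · unfold Tfun
      have h1 := hm_bound r
      have hr1 : 1 ≤ r ^ 2 := by nlinarith
      have hC₀r : C₀ ≤ C₀ * r ^ 2 := le_mul_of_one_le_right hC₀ hr1
      nlinarith [upper]
  constructor
  · exact ⟨τ / 16, C₀ + 2 * mm * B + 1, 4, hc₁, hc₂, fun r hr => key r hr⟩
  · have hlog2 : ∀ c : ℝ, 0 < c →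
        Filter.Tendsto (fun r : ℝ => Real.log c / Real.log r + 2) Filter.atTop (nhds 2) := by
      intro c hc
      have h1 : Filter.Tendsto (fun r : ℝ => Real.log c / Real.log r) Filter.atTop (nhds 0) :=
        Filter.Tendsto.div_atTop tendsto_const_nhds Real.tendsto_log_atTop
      simpa using h1.add (tendsto_const_nhds : Filter.Tendsto (fun _ : ℝ => (2:ℝ)) _ _)
    have hmain : Filter.Tendsto (fun r => Real.log (Tfun f ω r) / Real.log r)
        Filter.atTop (nhds 2) := by
      apply tendsto_of_tendsto_of_tendsto_of_le_of_le' (hlog2 _ hc₁) (hlog2 _ hc₂)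
      · filter_upwards [Filter.eventually_ge_atTop (4:ℝ)] with r hr
        have hr0 : (0:ℝ) < r := by linarith
        have hlogr : 0 < Real.log r := Real.log_pos (by linarith)
        have hT := (key r hr).1
        have hc₁r : 0 < τ / 16 * r ^ 2 := by positivity
        have hlog_le : Real.log (τ / 16 * r ^ 2) ≤ Real.log (Tfun f ω r) :=
          Real.log_le_log hc₁r hT
        have hexp : Real.log (τ / 16 * r ^ 2) = Real.log (τ / 16) + 2 * Real.log r := by
          rw [Real.log_mul (ne_of_gt hc₁) (by positivity), Real.log_pow]
          norm_num
        have heq : Real.log (τ / 16) / Real.log r + 2 = Real.log (τ / 16 * r ^ 2) / Real.log r := by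
          rw [hexp]
          field_simp
        rw [heq]
        exact (div_le_div_iff_of_pos_right hlogr).2 hlog_le
      · filter_upwards [Filter.eventually_ge_atTop (4:ℝ)] with r hr
        have hr0 : (0:ℝ) < r := by linarith
        have hlogr : 0 < Real.log r := Real.log_pos (by linarith)
        have hT := (key r hr).2
        have hTpos : 0 < Tfun f ω r := lt_of_lt_of_le (by positivity) (key r hr).1
        have hlog_le : Real.log (Tfun f ω r) ≤ Real.log ((C₀ + 2 * mm * B + 1) * r ^ 2) :=
          Real.log_le_log hTpos hT
        have hexp : Real.log ((C₀ + 2 * mm * B + 1) * r ^ 2) =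
            Real.log (C₀ + 2 * mm * B + 1) + 2 * Real.log r := by
          rw [Real.log_mul (ne_of_gt hc₂) (by positivity), Real.log_pow]
          norm_num
        have heq : Real.log (C₀ + 2 * mm * B + 1) / Real.log r + 2 =
            Real.log ((C₀ + 2 * mm * B + 1) * r ^ 2) / Real.log r := by
          rw [hexp]
          field_simp
        rw [heq]
        exact (div_le_div_iff_of_pos_right hlogr).2 hlog_le
    exact hmain.limsup_eq
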